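/- Let S be a finite nonempty set, κ a Markov kernel on S, and s₀ ∈ S. Then P_{s₀}-almost every trajectory ω : ℕ → S satisfies: there exist a set B ⊆ S that is a BSCC of the digraph of κ and an index N ∈ ℕ such that ω_n ∈ B for all n ≥ N and, for every b ∈ B, the set {n : ω_n = b} is infinite. -/

import Mathlib

open MeasureTheory Filter
open scoped ENNReal

/-- The edge relation of the digraph of the Markov kernel `κ`: there is an
edge `(a, b)` whenever `κ a` assigns positive probability to `b`. -/
def kerEdge {S : Type*} (κ : S → PMF S) (a b : S) : Prop :=
  κ a b ≠ 0

/-- Reachability in the digraph of `κ`: a directed path of edges. -/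
def kerReach {S : Type*} (κ : S → PMF S) : S → S → Prop :=
  Relation.ReflTransGen (kerEdge κ)

/-- `B` is a BSCC of the digraph of `κ`: it is nonempty, any two of its states
are mutually reachable, it is closed under edges, and it is a full
mutual-reachability class. -/
def IsBSCC {S : Type*} (κ : S → PMF S) (B : Set S) : Prop :=
  B.Nonempty ∧
  (∀ a ∈ B, ∀ b ∈ B, kerReach κ a b) ∧
  (∀ a ∈ B, ∀ b, kerEdge κ a b → b ∈ B) ∧
  (∀ a ∈ B, ∀ b, kerReach κ a b → kerReach κ b a → b ∈ B)

set_option linter.unusedSectionVars false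

namespace AEBSCCAux

variable {S : Type*} [Fintype S] [DecidableEq S] [MeasurableSpace S]
  [MeasurableSingletonClass S]

noncomputable def wt (κ : S → PMF S) (s₀ : S) (L : ℕ) (f : ℕ → S) : ℝ≥0∞ :=
  (if f 0 = s₀ then 1 else 0) * ∏ i ∈ Finset.range L, κ (f i) (f (i + 1))

def ext (L : ℕ) (g : Fin (L + 1) → S) : ℕ → S :=
  fun i => g ⟨min i L, Nat.lt_succ_of_le (min_le_right i L)⟩

def res (L : ℕ) (ω : ℕ → S) : Fin (L + 1) → S := fun j => ω j

lemma ext_apply {L : ℕ} (g : Fin (L + 1) → S) {i : ℕ} (hi : i ≤ L) :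
    ext L g i = g ⟨i, Nat.lt_succ_of_le hi⟩ :=
  congrArg g (Fin.ext (min_eq_left hi))

lemma res_eq_iff {L : ℕ} {ω : ℕ → S} {g : Fin (L + 1) → S} :
    res L ω = g ↔ ∀ i ≤ L, ω i = ext L g i := by
  constructor
  · intro h i hi
    rw [ext_apply g hi, ← h]; rfl
  · intro h
    funext j
    have hj : (j : ℕ) ≤ L := Nat.lt_succ_iff.mp j.isLt
    have := h j hj
    rw [ext_apply g hj] at this
    simpa [res] using this

lemma ext_res {L : ℕ} (ω : ℕ → S) {i : ℕ} (hi : i ≤ L) :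
    ext L (res L ω) i = ω i := by
  rw [ext_apply _ hi]; rfl

lemma measurableSet_cyl (L : ℕ) (f : ℕ → S) :
    MeasurableSet {ω : ℕ → S | ∀ i ≤ L, ω i = f i} := by
  have : {ω : ℕ → S | ∀ i ≤ L, ω i = f i}
      = ⋂ i, ⋂ (_ : i ≤ L), (fun ω : ℕ → S => ω i) ⁻¹' {f i} := by
    ext ω; simp [Set.mem_iInter]
  rw [this]
  exact MeasurableSet.iInter fun i => MeasurableSet.iInter fun _ =>
    (measurable_pi_apply i) (measurableSet_singleton _)

lemma measurableSet_resEq (L : ℕ) (g : Fin (L + 1) → S) :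
    MeasurableSet {ω : ℕ → S | res L ω = g} := by
  have : {ω : ℕ → S | res L ω = g} = {ω : ℕ → S | ∀ i ≤ L, ω i = ext L g i} := by
    ext ω; exact res_eq_iff
  rw [this]; exact measurableSet_cyl L _

lemma measurableSet_resMem (L : ℕ) (G : Finset (Fin (L + 1) → S)) :
    MeasurableSet {ω : ℕ → S | res L ω ∈ G} := by
  have : {ω : ℕ → S | res L ω ∈ G} = ⋃ g ∈ G, {ω : ℕ → S | res L ω = g} := by
    ext ω; simp
  rw [this]
  exact G.measurableSet_biUnion fun g _ => measurableSet_resEq L g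

variable (κ : S → PMF S) (s₀ : S) (P : Measure (ℕ → S))

lemma meas_resMem
    (hP : ∀ (k : ℕ) (f : ℕ → S), P {ω | ∀ i ≤ k, ω i = f i} = wt κ s₀ k f)
    (L : ℕ) (G : Finset (Fin (L + 1) → S)) :
    P {ω | res L ω ∈ G} = ∑ g ∈ G, wt κ s₀ L (ext L g) := by
  have hset : {ω : ℕ → S | res L ω ∈ G} = ⋃ g ∈ G, {ω : ℕ → S | res L ω = g} := by
    ext ω; simp
  rw [hset, measure_biUnion_finset ?_ (fun g _ => measurableSet_resEq L g)]
  · refine Finset.sum_congr rfl fun g _ => ?_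
    have : {ω : ℕ → S | res L ω = g} = {ω : ℕ → S | ∀ i ≤ L, ω i = ext L g i} := by
      ext ω; exact res_eq_iff
    rw [this, hP L (ext L g)]
  · intro g _ g' _ hne
    rw [Function.onFun, Set.disjoint_left]
    intro ω h1 h2
    have e1 : res L ω = g := h1
    have e2 : res L ω = g' := h2
    exact hne (e1.symm.trans e2)

def ext1 (L : ℕ) (g : Fin (L + 1) → S) (x : S) : ℕ → S :=
  fun i => if i ≤ L then ext L g i else x

lemma resx_eq_iff {L : ℕ} {ω : ℕ → S} {g : Fin (L + 1) → S} {x : S} :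
    (res L ω = g ∧ ω (L + 1) = x) ↔ ∀ i ≤ L + 1, ω i = ext1 L g x i := by
  constructor
  · rintro ⟨h1, h2⟩ i hi
    by_cases hiL : i ≤ L
    · rw [ext1, if_pos hiL]
      exact res_eq_iff.mp h1 i hiL
    · have : i = L + 1 := by omega
      subst this
      rw [ext1, if_neg hiL]; exact h2
  · intro h
    constructor
    · rw [res_eq_iff]
      intro i hi
      have := h i (Nat.le_succ_of_le hi)
      rwa [ext1, if_pos hi] at this
    · have := h (L + 1) le_rfl
      rwa [ext1, if_neg (by omega)] at this

lemma wt_ext1 (L : ℕ) (g : Fin (L + 1) → S) (x : S) :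
    wt κ s₀ (L + 1) (ext1 L g x) = wt κ s₀ L (ext L g) * κ (g (Fin.last L)) x := by
  unfold wt
  rw [Finset.prod_range_succ, ← mul_assoc]
  have h0 : ext1 L g x 0 = ext L g 0 := by rw [ext1, if_pos (Nat.zero_le L)]
  have hprod : ∏ i ∈ Finset.range L, (κ (ext1 L g x i) (ext1 L g x (i + 1)) : ℝ≥0∞)
      = ∏ i ∈ Finset.range L, (κ (ext L g i) (ext L g (i + 1)) : ℝ≥0∞) := by
    refine Finset.prod_congr rfl fun i hi => ?_
    have hiL : i < L := Finset.mem_range.mp hi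
    rw [ext1, if_pos hiL.le, ext1, if_pos (Nat.succ_le_of_lt hiL)]
  have hL : ext1 L g x L = g (Fin.last L) := by
    rw [ext1, if_pos le_rfl, ext_apply g le_rfl]; rfl
  have hL1 : ext1 L g x (L + 1) = x := by rw [ext1, if_neg (by omega)]
  rw [h0, hprod, hL, hL1]

lemma meas_resMem_and
    (hP : ∀ (k : ℕ) (f : ℕ → S), P {ω | ∀ i ≤ k, ω i = f i} = wt κ s₀ k f)
    (L : ℕ) (G : Finset (Fin (L + 1) → S)) (x : S) :
    P {ω | res L ω ∈ G ∧ ω (L + 1) = x}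
      = ∑ g ∈ G, wt κ s₀ L (ext L g) * κ (g (Fin.last L)) x := by
  have hset : {ω : ℕ → S | res L ω ∈ G ∧ ω (L + 1) = x}
      = ⋃ g ∈ G, {ω : ℕ → S | res L ω = g ∧ ω (L + 1) = x} := by
    ext ω
    simp only [Set.mem_setOf_eq, Set.mem_iUnion]
    constructor
    · rintro ⟨h1, h2⟩; exact ⟨res L ω, h1, rfl, h2⟩
    · rintro ⟨g, hg, rfl, h2⟩; exact ⟨hg, h2⟩
  rw [hset, measure_biUnion_finset ?_ ?_]
  · refine Finset.sum_congr rfl fun g _ => ?_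
    have : {ω : ℕ → S | res L ω = g ∧ ω (L + 1) = x}
        = {ω : ℕ → S | ∀ i ≤ L + 1, ω i = ext1 L g x i} := by
      ext ω; exact resx_eq_iff
    rw [this, hP (L + 1) (ext1 L g x), wt_ext1]
  · intro g _ g' _ hne
    rw [Function.onFun, Set.disjoint_left]
    intro ω h1 h2
    have e1 : res L ω = g ∧ ω (L + 1) = x := h1
    have e2 : res L ω = g' ∧ ω (L + 1) = x := h2
    exact hne (e1.1.symm.trans e2.1)
  · intro g _
    have : {ω : ℕ → S | res L ω = g ∧ ω (L + 1) = x}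
        = {ω : ℕ → S | ∀ i ≤ L + 1, ω i = ext1 L g x i} := by
      ext ω; exact resx_eq_iff
    rw [this]; exact measurableSet_cyl (L + 1) _

/-! ### Counting visits -/

def cnt (s : S) (M : ℕ) (ω : ℕ → S) (L : ℕ) : ℕ :=
  ((Finset.range L).filter fun n => M ≤ n ∧ ω n = s).card

lemma cnt_congr {s : S} {M : ℕ} {ω ω' : ℕ → S} {L : ℕ}
    (h : ∀ n < L, ω n = ω' n) : cnt s M ω L = cnt s M ω' L := by
  unfold cnt
  congr 1
  refine Finset.filter_congr fun n hn => ?_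
  rw [h n (Finset.mem_range.mp hn)]

lemma cnt_mono {s : S} {M : ℕ} (ω : ℕ → S) {L L' : ℕ} (h : L ≤ L') :
    cnt s M ω L ≤ cnt s M ω L' :=
  Finset.card_le_card (Finset.filter_subset_filter _ (Finset.range_subset_range.mpr h))

lemma cnt_succ (s : S) (M : ℕ) (ω : ℕ → S) (L : ℕ) :
    cnt s M ω (L + 1) = cnt s M ω L + if M ≤ L ∧ ω L = s then 1 else 0 := by
  unfold cnt
  rw [Finset.range_add_one, Finset.filter_insert]
  split_ifs with h
  · rw [Finset.card_insert_of_notMem (by simp)]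
  · simp

lemma exists_cnt_eq {s : S} {M : ℕ} {ω : ℕ → S} {k L' : ℕ}
    (h : k + 1 ≤ cnt s M ω L') :
    ∃ L < L', cnt s M ω L = k ∧ M ≤ L ∧ ω L = s := by
  induction L' with
  | zero => simp [cnt] at h
  | succ L ih =>
    rw [cnt_succ] at h
    by_cases hc : M ≤ L ∧ ω L = s
    · rw [if_pos hc] at h
      by_cases h' : k + 1 ≤ cnt s M ω L
      · obtain ⟨L₀, h₁, h₂⟩ := ih h'
        exact ⟨L₀, h₁.trans (Nat.lt_succ_self L), h₂⟩
      · exact ⟨L, Nat.lt_succ_self L, by omega, hc.1, hc.2⟩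
    · rw [if_neg hc] at h
      obtain ⟨L₀, h₁, h₂⟩ := ih (by omega)
      exact ⟨L₀, h₁.trans (Nat.lt_succ_self L), h₂⟩

lemma infinite_unbounded {p : ℕ → Prop} (h : {n | p n}.Infinite) (N : ℕ) :
    ∃ n, N ≤ n ∧ p n := by
  by_contra hc
  push_neg at hc
  refine h (Set.Finite.subset (Set.finite_Iio N) fun n hn => ?_)
  refine Set.mem_Iio.mpr ?_
  by_contra hlt
  exact hc n (le_of_not_gt hlt) hn

lemma exists_cnt_ge {s : S} {M : ℕ} {ω : ℕ → S}
    (hinf : {n | ω n = s}.Infinite) (k : ℕ) : ∃ L, k ≤ cnt s M ω L := by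
  induction k with
  | zero => exact ⟨0, Nat.zero_le _⟩
  | succ k ih =>
    obtain ⟨L, hL⟩ := ih
    obtain ⟨n, hn, hns⟩ := infinite_unbounded hinf (max L M)
    refine ⟨n + 1, ?_⟩
    have h1 : cnt s M ω (n + 1) = cnt s M ω n + 1 := by
      rw [cnt_succ, if_pos ⟨le_trans (le_max_right L M) hn, hns⟩]
    have h2 : cnt s M ω L ≤ cnt s M ω n :=
      cnt_mono ω (le_trans (le_max_left L M) hn)
    omega

/-! ### The main estimate -/

def Cset (s t : S) (M k L : ℕ) : Set (ℕ → S) :=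
  {ω | cnt s M ω L = k ∧ ω L = s ∧ M ≤ L ∧ ∀ n ≤ L, M < n → ω n ≠ t}

def Gc (s t : S) (M k L : ℕ) : Finset (Fin (L + 1) → S) :=
  Finset.univ.filter fun g =>
    cnt s M (ext L g) L = k ∧ g (Fin.last L) = s ∧ M ≤ L ∧
      ∀ n ≤ L, M < n → ext L g n ≠ t

lemma Cset_eq_res (s t : S) (M k L : ℕ) :
    Cset s t M k L = {ω | res L ω ∈ Gc s t M k L} := by
  ext ω
  simp only [Cset, Set.mem_setOf_eq, Gc, Finset.mem_filter, Finset.mem_univ, true_and]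
  have hc : cnt s M (ext L (res L ω)) L = cnt s M ω L :=
    cnt_congr fun n hn => ext_res ω hn.le
  have hlast : (res L ω) (Fin.last L) = ω L := rfl
  constructor
  · rintro ⟨h1, h2, h3, h4⟩
    refine ⟨hc.trans h1, hlast.trans h2, h3, fun n hn hMn => ?_⟩
    rw [ext_res ω hn]; exact h4 n hn hMn
  · rintro ⟨h1, h2, h3, h4⟩
    refine ⟨hc.symm.trans h1, hlast.symm.trans h2, h3, fun n hn hMn => ?_⟩
    have := h4 n hn hMn
    rwa [ext_res ω hn] at this

lemma measurableSet_Cset (s t : S) (M k L : ℕ) :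
    MeasurableSet (Cset s t M k L) := by
  rw [Cset_eq_res]; exact measurableSet_resMem L _

lemma Cset_disjoint (s t : S) (M k : ℕ) :
    Pairwise (Function.onFun Disjoint (Cset s t M k)) := by
  have key : ∀ L L', L < L' → ∀ ω, ω ∈ Cset s t M k L → ω ∉ Cset s t M k L' := by
    intro L L' hLL' ω h h'
    have h1 : cnt s M ω (L + 1) = k + 1 := by
      rw [cnt_succ, if_pos ⟨h.2.2.1, h.2.1⟩, h.1]
    have h2 : cnt s M ω (L + 1) ≤ cnt s M ω L' := cnt_mono ω hLL'
    have := h'.1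
    omega
  intro L L' hne
  rw [Function.onFun, Set.disjoint_left]
  intro ω h1 h2
  rcases lt_or_gt_of_ne hne with h | h
  · exact key L L' h ω h1 h2
  · exact key L' L h ω h2 h1

lemma meas_Cset_step
    (hP : ∀ (k : ℕ) (f : ℕ → S), P {ω | ∀ i ≤ k, ω i = f i} = wt κ s₀ k f)
    (s t : S) (M k L : ℕ) :
    P (Cset s t M k L ∩ {ω | ω (L + 1) ≠ t})
      = (∑ x ∈ Finset.univ.erase t, κ s x) * P (Cset s t M k L) := by
  have hGs : ∀ g ∈ Gc s t M k L, g (Fin.last L) = s := fun g hg =>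
    ((Finset.mem_filter.mp hg).2).2.1
  have hset : Cset s t M k L ∩ {ω | ω (L + 1) ≠ t}
      = ⋃ x ∈ Finset.univ.erase t,
          {ω | res L ω ∈ Gc s t M k L ∧ ω (L + 1) = x} := by
    rw [Cset_eq_res]
    ext ω
    simp only [Set.mem_inter_iff, Set.mem_setOf_eq, Set.mem_iUnion,
      Finset.mem_erase, Finset.mem_univ, and_true, exists_prop]
    constructor
    · rintro ⟨h1, h2⟩; exact ⟨ω (L + 1), h2, h1, rfl⟩
    · rintro ⟨x, hx, h1, h2⟩; exact ⟨h1, h2 ▸ hx⟩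
  have hdisj : (↑(Finset.univ.erase t) : Set S).PairwiseDisjoint
      (fun x => {ω : ℕ → S | res L ω ∈ Gc s t M k L ∧ ω (L + 1) = x}) := by
    intro x _ x' _ hne
    rw [Function.onFun, Set.disjoint_left]
    intro ω h1 h2
    have e1 : res L ω ∈ Gc s t M k L ∧ ω (L + 1) = x := h1
    have e2 : res L ω ∈ Gc s t M k L ∧ ω (L + 1) = x' := h2
    exact hne (e1.2.symm.trans e2.2)
  have hmeas : ∀ x ∈ Finset.univ.erase t,
      MeasurableSet {ω : ℕ → S | res L ω ∈ Gc s t M k L ∧ ω (L + 1) = x} := by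
    intro x _
    have : {ω : ℕ → S | res L ω ∈ Gc s t M k L ∧ ω (L + 1) = x}
        = {ω : ℕ → S | res L ω ∈ Gc s t M k L} ∩ ((fun ω : ℕ → S => ω (L + 1)) ⁻¹' {x}) := by
      ext ω; simp [Set.mem_preimage]
    rw [this]
    exact (measurableSet_resMem L _).inter
      ((measurable_pi_apply (L + 1)) (measurableSet_singleton x))
  rw [hset, measure_biUnion_finset hdisj hmeas]
  calc
    ∑ x ∈ Finset.univ.erase t,
        P {ω | res L ω ∈ Gc s t M k L ∧ ω (L + 1) = x}
      = ∑ x ∈ Finset.univ.erase t, ∑ g ∈ Gc s t M k L,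
          wt κ s₀ L (ext L g) * κ (g (Fin.last L)) x :=
        Finset.sum_congr rfl fun x _ => meas_resMem_and κ s₀ P hP L _ x
    _ = ∑ g ∈ Gc s t M k L, ∑ x ∈ Finset.univ.erase t,
          wt κ s₀ L (ext L g) * κ (g (Fin.last L)) x := Finset.sum_comm
    _ = ∑ g ∈ Gc s t M k L,
          wt κ s₀ L (ext L g) * ∑ x ∈ Finset.univ.erase t, κ s x := by
        refine Finset.sum_congr rfl fun g hg => ?_
        rw [← Finset.mul_sum, hGs g hg]
    _ = (∑ x ∈ Finset.univ.erase t, κ s x) * ∑ g ∈ Gc s t M k L,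
          wt κ s₀ L (ext L g) := by
        rw [← Finset.sum_mul, mul_comm]
    _ = (∑ x ∈ Finset.univ.erase t, κ s x) * P (Cset s t M k L) := by
        rw [Cset_eq_res, meas_resMem κ s₀ P hP L]

/-- The key estimate: the probability of visiting `s` infinitely often while
avoiding `t` after time `M` is zero, provided `κ s t ≠ 0`. -/
lemma key_null
    (hP : ∀ (k : ℕ) (f : ℕ → S), P {ω | ∀ i ≤ k, ω i = f i} = wt κ s₀ k f)
    [IsProbabilityMeasure P]
    (s t : S) (M : ℕ) (hst : κ s t ≠ 0) :
    P {ω | {n | ω n = s}.Infinite ∧ ∀ n, M < n → ω n ≠ t} = 0 := by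
  set q : ℝ≥0∞ := ∑ x ∈ Finset.univ.erase t, κ s x with hq_def
  have hq1 : q + κ s t = 1 := by
    rw [Finset.sum_erase_add _ _ (Finset.mem_univ t)]
    rw [← tsum_fintype (L := SummationFilter.unconditional _)]
    exact (κ s).tsum_coe
  have hqle : q ≤ 1 := by
    rw [← hq1]; exact le_self_add
  have hqlt : q < 1 := by
    refine lt_of_le_of_ne hqle fun h => hst ?_
    rw [h] at hq1
    have : (1 : ℝ≥0∞) + κ s t = 1 + 0 := by rw [add_zero]; exact hq1
    exact (ENNReal.add_right_inj ENNReal.one_ne_top).mp this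
  -- total mass of level-k hitting sets
  have hQ : ∀ k : ℕ, ∑' L, P (Cset s t M k L) ≤ q ^ k := by
    intro k
    induction k with
    | zero =>
      rw [← measure_iUnion (Cset_disjoint s t M 0) (measurableSet_Cset s t M 0)]
      simpa using prob_le_one
    | succ k ih =>
      have hsub : (⋃ L, Cset s t M (k + 1) L)
          ⊆ ⋃ L, (Cset s t M k L ∩ {ω | ω (L + 1) ≠ t}) := by
        intro ω hω
        obtain ⟨L', hL'⟩ := Set.mem_iUnion.mp hω
        obtain ⟨h1, h2, h3, h4⟩ := hL'
        obtain ⟨L, hLL', hcnt, hML, hωL⟩ := exists_cnt_eq (by omega : k + 1 ≤ cnt s M ω L')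
        refine Set.mem_iUnion.mpr ⟨L, ⟨hcnt, hωL, hML, fun n hn hMn => h4 n (hn.trans hLL'.le) hMn⟩, ?_⟩
        exact h4 (L + 1) (by omega) (by omega)
      calc
        ∑' L, P (Cset s t M (k + 1) L)
            = P (⋃ L, Cset s t M (k + 1) L) :=
              (measure_iUnion (Cset_disjoint s t M (k + 1))
                (measurableSet_Cset s t M (k + 1))).symm
        _ ≤ P (⋃ L, (Cset s t M k L ∩ {ω | ω (L + 1) ≠ t})) := measure_mono hsub
        _ ≤ ∑' L, P (Cset s t M k L ∩ {ω | ω (L + 1) ≠ t}) := measure_iUnion_le _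
        _ = ∑' L, q * P (Cset s t M k L) := by
              refine tsum_congr fun L => ?_
              exact meas_Cset_step κ s₀ P hP s t M k L
        _ = q * ∑' L, P (Cset s t M k L) := ENNReal.tsum_mul_left
        _ ≤ q * q ^ k := mul_le_mul_right ih q
        _ = q ^ (k + 1) := (pow_succ q k).symm ▸ (mul_comm q (q ^ k)) ▸ rfl
  -- the bad set is contained in each level union
  have hbad : ∀ k : ℕ,
      {ω : ℕ → S | {n | ω n = s}.Infinite ∧ ∀ n, M < n → ω n ≠ t}
        ⊆ ⋃ L, (Cset s t M k L ∩ {ω | ω (L + 1) ≠ t}) := by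
    intro k ω hω
    obtain ⟨hinf, hnt⟩ := hω
    obtain ⟨L', hL'⟩ := exists_cnt_ge (M := M) hinf (k + 1)
    obtain ⟨L, _, hcnt, hML, hωL⟩ := exists_cnt_eq hL'
    refine Set.mem_iUnion.mpr ⟨L, ⟨hcnt, hωL, hML, fun n _ hMn => hnt n hMn⟩, ?_⟩
    exact hnt (L + 1) (by omega)
  have hbound : ∀ k : ℕ,
      P {ω : ℕ → S | {n | ω n = s}.Infinite ∧ ∀ n, M < n → ω n ≠ t} ≤ q ^ (k + 1) := by
    intro k
    calc
      P {ω : ℕ → S | {n | ω n = s}.Infinite ∧ ∀ n, M < n → ω n ≠ t}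
          ≤ P (⋃ L, (Cset s t M k L ∩ {ω | ω (L + 1) ≠ t})) := measure_mono (hbad k)
      _ ≤ ∑' L, P (Cset s t M k L ∩ {ω | ω (L + 1) ≠ t}) := measure_iUnion_le _
      _ = q * ∑' L, P (Cset s t M k L) := by
            rw [← ENNReal.tsum_mul_left]
            exact tsum_congr fun L => meas_Cset_step κ s₀ P hP s t M k L
      _ ≤ q * q ^ k := mul_le_mul_right (hQ k) q
      _ = q ^ (k + 1) := by rw [pow_succ, mul_comm]
  have htend : Tendsto (fun k : ℕ => q ^ (k + 1)) atTop (nhds 0) :=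
    (ENNReal.tendsto_pow_atTop_nhds_zero_of_lt_one hqlt).comp (tendsto_add_atTop_nat 1)
  exact le_antisymm (ge_of_tendsto' htend hbound) zero_le

lemma step_null
    (hP : ∀ (k : ℕ) (f : ℕ → S), P {ω | ∀ i ≤ k, ω i = f i} = wt κ s₀ k f)
    (n : ℕ) (a b : S) (hab : κ a b = 0) :
    P {ω : ℕ → S | ω n = a ∧ ω (n + 1) = b} = 0 := by
  set G : Finset (Fin (n + 1 + 1) → S) :=
    Finset.univ.filter (fun g => g ⟨n, by omega⟩ = a ∧ g ⟨n + 1, by omega⟩ = b) with hG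
  have hset : {ω : ℕ → S | ω n = a ∧ ω (n + 1) = b} = {ω : ℕ → S | res (n + 1) ω ∈ G} := by
    ext ω
    simp only [Set.mem_setOf_eq, hG, Finset.mem_filter, Finset.mem_univ, true_and]
    exact Iff.rfl
  rw [hset, meas_resMem κ s₀ P hP (n + 1) G]
  refine Finset.sum_eq_zero fun g hg => ?_
  obtain ⟨h1, h2⟩ := (Finset.mem_filter.mp hg).2
  have hfac : (κ (ext (n + 1) g n) (ext (n + 1) g (n + 1)) : ℝ≥0∞) = 0 := by
    rw [ext_apply g (by omega : n ≤ n + 1), ext_apply g (le_refl (n + 1))]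
    rw [show (⟨n, Nat.lt_succ_of_le (by omega)⟩ : Fin (n + 1 + 1)) = ⟨n, by omega⟩ from rfl]
    rw [show (⟨n + 1, Nat.lt_succ_of_le (le_refl (n + 1))⟩ : Fin (n + 1 + 1)) = ⟨n + 1, by omega⟩ from rfl]
    rw [h1, h2]
    exact_mod_cast hab
  rw [wt, Finset.prod_eq_zero (Finset.mem_range.mpr (by omega : n < n + 1)) hfac, mul_zero]


end AEBSCCAux

open AEBSCCAux in
/-- Let `S` be a finite nonempty set, `κ` a Markov kernel on
`S`, `s₀ ∈ S`, and let `P` be the law on trajectory space of the Markov chain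
started at `s₀` with kernel `κ` (characterized by its values on cylinders).
Then `P`-almost every trajectory `ω` eventually stays in some BSCC `B` of the
digraph of `κ` and visits every state of `B` infinitely often. -/
theorem ae_eventually_in_BSCC {S : Type*} [Fintype S] [Nonempty S] [DecidableEq S]
    [MeasurableSpace S] [MeasurableSingletonClass S]
    (κ : S → PMF S) (s₀ : S)
    (P : Measure (ℕ → S)) [IsProbabilityMeasure P]
    (hP : ∀ (k : ℕ) (f : ℕ → S),
      P {ω | ∀ i ≤ k, ω i = f i} =
        (if f 0 = s₀ then 1 else 0) * ∏ i ∈ Finset.range k, κ (f i) (f (i + 1))) :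
    ∀ᵐ ω ∂P, ∃ B : Set S, IsBSCC κ B ∧
      ∃ N : ℕ, (∀ n ≥ N, ω n ∈ B) ∧ ∀ b ∈ B, {n : ℕ | ω n = b}.Infinite := by
  classical
  have hPw : ∀ (k : ℕ) (f : ℕ → S), P {ω | ∀ i ≤ k, ω i = f i} = wt κ s₀ k f := hP
  -- a.e., every consecutive step is an edge
  have hstep0 : P {ω : ℕ → S | ∃ n, ¬ kerEdge κ (ω n) (ω (n + 1))} = 0 := by
    have hsub : {ω : ℕ → S | ∃ n, ¬ kerEdge κ (ω n) (ω (n + 1))}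
        ⊆ ⋃ (n : ℕ), ⋃ (p : S × S), ⋃ (_ : κ p.1 p.2 = 0),
            {ω : ℕ → S | ω n = p.1 ∧ ω (n + 1) = p.2} := by
      rintro ω ⟨n, hn⟩
      rw [kerEdge, not_not] at hn
      exact Set.mem_iUnion.mpr ⟨n, Set.mem_iUnion.mpr ⟨(ω n, ω (n + 1)),
        Set.mem_iUnion.mpr ⟨hn, rfl, rfl⟩⟩⟩
    refine measure_mono_null hsub (measure_iUnion_null fun n => measure_iUnion_null fun p =>
      measure_iUnion_null fun hp => step_null κ s₀ P hPw n p.1 p.2 hp)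
  have h1 : ∀ᵐ ω ∂P, ∀ n, kerEdge κ (ω n) (ω (n + 1)) := by
    rw [MeasureTheory.ae_iff]
    have : {ω : ℕ → S | ¬ ∀ n, kerEdge κ (ω n) (ω (n + 1))}
        = {ω : ℕ → S | ∃ n, ¬ kerEdge κ (ω n) (ω (n + 1))} := by
      ext ω; simp [not_forall]
    rw [this]; exact hstep0
  -- a.e., the set of infinitely visited states is closed under edges
  have h2 : ∀ᵐ ω ∂P, ∀ s t : S, kerEdge κ s t →
      {n | ω n = s}.Infinite → {n | ω n = t}.Infinite := by
    rw [ae_all_iff]; intro s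
    rw [ae_all_iff]; intro t
    by_cases hst : kerEdge κ s t
    · have hnull : P {ω : ℕ → S | {n | ω n = s}.Infinite ∧ ¬ {n | ω n = t}.Infinite} = 0 := by
        have hsub : {ω : ℕ → S | {n | ω n = s}.Infinite ∧ ¬ {n | ω n = t}.Infinite}
            ⊆ ⋃ M : ℕ, {ω : ℕ → S | {n | ω n = s}.Infinite ∧ ∀ n, M < n → ω n ≠ t} := by
          rintro ω ⟨hs, ht⟩
          rw [Set.not_infinite] at ht
          obtain ⟨M, hM⟩ := ht.bddAbove
          refine Set.mem_iUnion.mpr ⟨M, hs, fun n hn hne => ?_⟩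
          have : n ≤ M := hM (show n ∈ {n | ω n = t} from hne)
          omega
        exact measure_mono_null hsub
          (measure_iUnion_null fun M => key_null κ s₀ P hPw s t M hst)
      rw [MeasureTheory.ae_iff]
      refine measure_mono_null ?_ hnull
      intro ω hω
      simp only [Set.mem_setOf_eq] at hω ⊢
      by_cases hsI : {n | ω n = s}.Infinite
      · by_cases htI : {n | ω n = t}.Infinite
        · exact absurd (fun _ _ => htI) hω
        · exact ⟨hsI, htI⟩
      · exact absurd (fun _ h => absurd h hsI) hω
    · exact Filter.Eventually.of_forall fun ω h => absurd h hst
  filter_upwards [h1, h2] with ω hsteps hclosed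
  -- the set of infinitely visited states
  set B : Set S := {b : S | {n | ω n = b}.Infinite} with hB
  have hBmem : ∀ b : S, b ∈ B ↔ {n | ω n = b}.Infinite := fun b => Iff.rfl
  have hne : ∃ b : S, b ∈ B := by
    by_contra hcon
    push_neg at hcon
    have hfin : (Set.univ : Set ℕ).Finite := by
      have huniv : (Set.univ : Set ℕ) = ⋃ b : S, {n | ω n = b} := by
        ext n; simp
      rw [huniv]
      exact Set.finite_iUnion fun b => Set.not_infinite.mp fun h => hcon b h
    exact Set.infinite_univ hfin
  have hreach : ∀ n m : ℕ, n ≤ m → kerReach κ (ω n) (ω m) := by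
    intro n m h
    induction m, h using Nat.le_induction with
    | base => exact Relation.ReflTransGen.refl
    | succ m hm ih => exact ih.tail (hsteps m)
  have hclosed' : ∀ a ∈ B, ∀ c, kerEdge κ a c → c ∈ B := fun a ha c hc =>
    hclosed a c hc ha
  have hmutual : ∀ a ∈ B, ∀ b ∈ B, kerReach κ a b := by
    intro a ha b hb
    obtain ⟨n, hn⟩ := Set.Infinite.nonempty ha
    obtain ⟨m, hm, hmb⟩ := infinite_unbounded hb n
    have := hreach n m hm
    rwa [hn, hmb] at this
  have hclass : ∀ a ∈ B, ∀ b, kerReach κ a b → kerReach κ b a → b ∈ B := by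
    intro a ha b hab hba
    clear hba
    induction hab with
    | refl => exact ha
    | tail _ e ih => exact hclosed' _ ih _ e
  have hT : {n : ℕ | ω n ∉ B}.Finite := by
    have hsub : {n : ℕ | ω n ∉ B} ⊆ ⋃ b ∈ {b : S | b ∉ B}, {n : ℕ | ω n = b} := by
      intro n hn
      exact Set.mem_biUnion hn rfl
    refine Set.Finite.subset (Set.Finite.biUnion (Set.toFinite _) fun b hb => ?_) hsub
    exact Set.not_infinite.mp hb
  obtain ⟨N, hN⟩ := hT.bddAbove
  refine ⟨B, ⟨hne, hmutual, hclosed', hclass⟩, N + 1, fun n hn => ?_, fun b hb => hb⟩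
  by_contra hnB
  have : n ≤ N := hN (show n ∈ {n : ℕ | ω n ∉ B} from hnB)
  omega
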